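/- For every d×d unitary matrix V and every i : Fin d, letting M = P · (I_d ⊗ₖ V) · (E_{ii} ⊗ₖ (1/d) • I_d) · (I_d ⊗ₖ V)† · P†, one has tr₂(M) = E_{ii}, where E_{ii} = Matrix.stdBasisMatrix i i 1. (Correctness of the zero-error private communication scheme: when the data register carries the basis state |i⟩ and the second input is maximally mixed, Bob's output is exactly |i⟩⟨i|, regardless of V.) -/

import Mathlib

open Matrix Kronecker

/-- The controlled-phase gate P, diagonal with P[(i,j),(i,j)] = ω^{i·j}, ω = exp(2πi/d). -/
noncomputable def Pgate (d : ℕ) : Matrix (Fin d × Fin d) (Fin d × Fin d) ℂ :=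
  Matrix.diagonal fun p => Complex.exp (2 * Real.pi * Complex.I / d) ^ ((p.1 : ℕ) * (p.2 : ℕ))

/-- Partial trace over the second system: tr₂(M)[i,k] = Σ_j M[(i,j),(k,j)]. -/
noncomputable def ptrace2 (d : ℕ) (M : Matrix (Fin d × Fin d) (Fin d × Fin d) ℂ) :
    Matrix (Fin d) (Fin d) ℂ :=
  fun i k => ∑ j : Fin d, M (i, j) (k, j)

/-- Correctness of the zero-error private scheme: with data state |i⟩⟨i| and maximally
mixed second input, Bob's output is exactly |i⟩⟨i|, for every unitary V. -/
theorem stmt_14 (d : ℕ) (hd : 2 ≤ d)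
    (V : Matrix (Fin d) (Fin d) ℂ) (hV : V ∈ Matrix.unitaryGroup (Fin d) ℂ) (i : Fin d) :
    ptrace2 d
      (Pgate d * ((1 : Matrix (Fin d) (Fin d) ℂ) ⊗ₖ V) *
        ((Matrix.single i i (1 : ℂ)) ⊗ₖ (((d : ℂ))⁻¹ • (1 : Matrix (Fin d) (Fin d) ℂ))) *
        ((1 : Matrix (Fin d) (Fin d) ℂ) ⊗ₖ V)ᴴ * (Pgate d)ᴴ) =
      Matrix.single i i (1 : ℂ) := by
  have hd0 : (d : ℂ) ≠ 0 := by
    exact_mod_cast Nat.cast_ne_zero.mpr (by omega)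
  -- collapse the unitary conjugation
  have hVV : V * Vᴴ = 1 := (Matrix.mem_unitaryGroup_iff.mp hV)
  have hmid : ((1 : Matrix (Fin d) (Fin d) ℂ) ⊗ₖ V) *
      ((Matrix.single i i (1 : ℂ)) ⊗ₖ (((d : ℂ))⁻¹ • (1 : Matrix (Fin d) (Fin d) ℂ))) *
      ((1 : Matrix (Fin d) (Fin d) ℂ) ⊗ₖ V)ᴴ =
      (Matrix.single i i (1 : ℂ)) ⊗ₖ (((d : ℂ))⁻¹ • (1 : Matrix (Fin d) (Fin d) ℂ)) := by
    have hK : ((1 : Matrix (Fin d) (Fin d) ℂ) ⊗ₖ V)ᴴ =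
        (1 : Matrix (Fin d) (Fin d) ℂ) ⊗ₖ Vᴴ := by
      ext p q
      simp [Matrix.conjTranspose_apply, Matrix.one_apply, apply_ite (star : ℂ → ℂ), eq_comm]
    rw [hK, ← Matrix.mul_kronecker_mul, ← Matrix.mul_kronecker_mul]
    simp [Matrix.mul_smul, Matrix.smul_mul, hVV]
  have hrw : Pgate d * ((1 : Matrix (Fin d) (Fin d) ℂ) ⊗ₖ V) *
        ((Matrix.single i i (1 : ℂ)) ⊗ₖ (((d : ℂ))⁻¹ • (1 : Matrix (Fin d) (Fin d) ℂ))) *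
        ((1 : Matrix (Fin d) (Fin d) ℂ) ⊗ₖ V)ᴴ * (Pgate d)ᴴ =
      Pgate d *
        ((Matrix.single i i (1 : ℂ)) ⊗ₖ (((d : ℂ))⁻¹ • (1 : Matrix (Fin d) (Fin d) ℂ))) *
        (Pgate d)ᴴ := by
    rw [mul_assoc (Pgate d), mul_assoc (Pgate d), hmid]
  rw [hrw]
  -- ω * star ω = 1
  have hω : ∀ n : ℕ, Complex.exp (2 * Real.pi * Complex.I / d) ^ n *
      (starRingEnd ℂ) (Complex.exp (2 * Real.pi * Complex.I / d) ^ n) = 1 := by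
    intro n
    rw [map_pow, ← mul_pow, ← Complex.exp_conj, ← Complex.exp_add]
    have : (starRingEnd ℂ) (2 * Real.pi * Complex.I / d) = -(2 * Real.pi * Complex.I / d) := by
      simp [map_div₀, Complex.conj_I, map_ofNat]
      ring
    rw [this, add_neg_cancel, Complex.exp_zero, one_pow]
  ext a c
  simp only [ptrace2, Pgate, Matrix.diagonal_conjTranspose, Matrix.diagonal_mul,
    Matrix.mul_diagonal, Matrix.kroneckerMap_apply, Matrix.smul_apply, Matrix.one_apply_eq,
    smul_eq_mul, mul_one, Pi.star_apply]
  by_cases hai : a = i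
  · by_cases hci : c = i
    · subst hai; subst hci
      simp only [Matrix.single_apply_same]
      have : ∀ j : Fin d, Complex.exp (2 * Real.pi * Complex.I / d) ^ ((c : ℕ) * (j : ℕ)) *
          (1 * (d : ℂ)⁻¹) *
          star (Complex.exp (2 * Real.pi * Complex.I / d) ^ ((c : ℕ) * (j : ℕ))) = (d : ℂ)⁻¹ := by
        intro j
        have := hω ((c : ℕ) * (j : ℕ))
        rw [one_mul]
        calc Complex.exp (2 * Real.pi * Complex.I / d) ^ ((c : ℕ) * (j : ℕ)) * (d : ℂ)⁻¹ *
              star (Complex.exp (2 * Real.pi * Complex.I / d) ^ ((c : ℕ) * (j : ℕ)))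
            = (Complex.exp (2 * Real.pi * Complex.I / d) ^ ((c : ℕ) * (j : ℕ)) *
              (starRingEnd ℂ) (Complex.exp (2 * Real.pi * Complex.I / d) ^ ((c : ℕ) * (j : ℕ)))) *
              (d : ℂ)⁻¹ := by ring_nf; rfl
          _ = (d : ℂ)⁻¹ := by rw [this, one_mul]
      rw [Finset.sum_congr rfl fun j _ => this j]
      simp [Finset.card_univ, mul_inv_cancel₀ hd0]
    · rw [Matrix.single_apply_of_ne _ _ _ _ _ (by tauto)]
      simp [Matrix.single_apply_of_ne _ _ _ _ _ (by tauto : ¬(i = a ∧ i = c))]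
  · rw [Matrix.single_apply_of_ne _ _ _ _ _ (by tauto)]
    simp [Matrix.single_apply_of_ne _ _ _ _ _ (by tauto : ¬(i = a ∧ i = c))]
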